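/- Let φ(t) = B_0 + Σ_{k=1}^{2d} B_k e^{-μ_k t} with 0 < μ_1 < μ_2 < … < μ_{2d}, B_0 > 0, B_{2i}B_{2i+1} < 0 and B_{2i+1}B_{2i+2} > 0 for all i. Then φ has at most d real zeros. -/

import Mathlib

open Finset

private lemma pos_right {a b : ℝ} (ha : 0 < a) (hab : 0 < a * b) : 0 < b := by
  rcases mul_pos_iff.mp hab with ⟨_, h⟩ | ⟨h, _⟩
  · exact h
  · linarith

/-- Rolle-type counting: if the zeros of `deriv f` lie in a finset of size `≤ n`,
then the zeros of `f` lie in a finset of size `≤ n + 1`. -/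
private lemma rolle_count (f : ℝ → ℝ) (hf : Differentiable ℝ f) (n : ℕ) (s : Finset ℝ)
    (hcard : s.card ≤ n) (hs : ∀ x, deriv f x = 0 → x ∈ s) :
    ∃ u : Finset ℝ, u.card ≤ n + 1 ∧ ∀ x, f x = 0 → x ∈ u := by
  have key : ∀ t : Finset ℝ, (∀ x ∈ t, f x = 0) → t.card ≤ n + 1 := by
    intro t ht
    by_contra hlt
    push_neg at hlt
    obtain ⟨t', ht't, hcard'⟩ := Finset.exists_subset_card_eq (show n + 2 ≤ t.card by omega)
    have e := t'.orderIsoOfFin hcard'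
    have hz : ∀ i : Fin (n + 2), f ((e i : ℝ)) = 0 := fun i =>
      ht _ (ht't (e i).2)
    have hmono : ∀ i j : Fin (n + 2), i ≤ j → ((e i : ℝ)) ≤ ((e j : ℝ)) := by
      intro i j h
      exact_mod_cast Subtype.coe_le_coe.mpr (e.monotone h)
    have hsm : ∀ i j : Fin (n + 2), i < j → ((e i : ℝ)) < ((e j : ℝ)) := by
      intro i j h
      exact_mod_cast Subtype.coe_lt_coe.mpr (e.strictMono h)
    have hc : ∀ i : Fin (n + 1), ∃ c,
        c ∈ Set.Ioo ((e i.castSucc : ℝ)) ((e i.succ : ℝ)) ∧ deriv f c = 0 := by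
      intro i
      have hab : ((e i.castSucc : ℝ)) < ((e i.succ : ℝ)) :=
        hsm _ _ (Fin.castSucc_lt_succ (i := i))
      obtain ⟨c, hc1, hc2⟩ := exists_deriv_eq_zero hab (hf.continuous.continuousOn)
        ((hz _).trans (hz _).symm)
      exact ⟨c, hc1, hc2⟩
    choose c hc1 hc2 using hc
    have hcmono : StrictMono c := by
      intro i j hij
      have h1 : c i < ((e i.succ : ℝ)) := (hc1 i).2
      have h2 : ((e i.succ : ℝ)) ≤ ((e j.castSucc : ℝ)) := by
        apply hmono
        simp only [Fin.le_def, Fin.val_succ, Fin.coe_castSucc]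
        exact hij
      have h3 : ((e j.castSucc : ℝ)) < c j := (hc1 j).1
      linarith
    have hle : (Finset.univ : Finset (Fin (n + 1))).card ≤ s.card := by
      apply Finset.card_le_card_of_injOn c
      · intro i _
        exact hs _ (hc2 i)
      · exact hcmono.injective.injOn
    simp at hle
    omega
  have hfin : {x : ℝ | f x = 0}.Finite := by
    by_contra h
    obtain ⟨t, hts, htc⟩ := Set.Infinite.exists_subset_card_eq h (n + 2)
    have := key t (fun x hx => hts hx)
    omega
  refine ⟨hfin.toFinset, key _ (fun x hx => by simpa using hx), fun x hx => by simpa using hx⟩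

/-- Descartes-style induction for exponential sums with the specific sign pattern
`+ - - + + - - …` (truncated, trailing terms constant sign). -/
private lemma aux (d : ℕ) : ∀ (m : ℕ) (C lam : ℕ → ℝ),
    (∀ k l, k < l → l ≤ m → lam l < lam k) →
    (∀ k, k ≤ m → 0 < C k * (-1 : ℝ) ^ ((min k (2 * d - 1) + 1) / 2)) →
    ∃ s : Finset ℝ, s.card ≤ d ∧
      ∀ t : ℝ, (∑ k ∈ Finset.range (m + 1), C k * Real.exp (lam k * t)) = 0 → t ∈ s := by
  induction d with
  | zero =>
    intro m C lam _ hC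
    refine ⟨∅, le_rfl, fun t ht => absurd ht (ne_of_gt ?_)⟩
    apply Finset.sum_pos
    · intro k hk
      have hk' : k ≤ m := by simpa using Nat.lt_succ_iff.mp (Finset.mem_range.mp hk)
      have := hC k hk'
      simp only [Nat.mul_zero, Nat.zero_sub, Nat.min_zero] at this
      norm_num at this
      exact mul_pos this (Real.exp_pos _)
    · exact ⟨0, by simp⟩
  | succ d IH =>
    intro m C lam hlam hC
    by_cases hm : m ≤ 2 * d
    · -- pattern already has at most d sign changes
      obtain ⟨s, hs1, hs2⟩ := IH m C lam hlam (by
        intro k hk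
        have heq : (min k (2 * d - 1) + 1) / 2 = (min k (2 * (d + 1) - 1) + 1) / 2 := by
          omega
        rw [heq]
        exact hC k hk)
      exact ⟨s, hs1.trans (Nat.le_succ d), hs2⟩
    · push_neg at hm
      have h2d1 : 2 * d + 1 ≤ m := hm
      have h01 : lam (2 * d + 1) < lam (2 * d) := hlam _ _ (by omega) (by omega)
      set ρ : ℝ := (lam (2 * d) + lam (2 * d + 1)) / 2 with hρdef
      have hρ1 : lam (2 * d + 1) < ρ := by rw [hρdef]; linarith
      have hρ2 : ρ < lam (2 * d) := by rw [hρdef]; linarith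
      set D : ℕ → ℝ := fun k => C k * (lam k - ρ) with hD
      set lam' : ℕ → ℝ := fun k => lam k - ρ with hlam'def
      set g : ℝ → ℝ := fun t => ∑ k ∈ Finset.range (m + 1), C k * Real.exp (lam' k * t)
        with hgdef
      have hg' : ∀ t : ℝ, HasDerivAt g
          (∑ k ∈ Finset.range (m + 1), D k * Real.exp (lam' k * t)) t := by
        intro t
        apply HasDerivAt.fun_sum
        intro k hk
        have h1 := (((hasDerivAt_id t).const_mul (lam' k)).exp).const_mul (C k)
        convert h1 using 1
        · rfl
        · rfl
        simp only [hD, id_eq]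
        ring
      have hgdiff : Differentiable ℝ g := fun x => (hg' x).differentiableAt
      -- signs of D follow the pattern for `d`
      have hDsign : ∀ k, k ≤ m → 0 < D k * (-1 : ℝ) ^ ((min k (2 * d - 1) + 1) / 2) := by
        intro k hk
        rcases le_or_gt k (2 * d) with hk2 | hk2
        · have hpos : 0 < lam k - ρ := by
            rcases eq_or_lt_of_le hk2 with h | h
            · rw [h]; linarith
            · have := hlam k (2 * d) h (by omega); linarith
          have hCk := hC k hk
          have heq : (min k (2 * (d + 1) - 1) + 1) / 2 = (min k (2 * d - 1) + 1) / 2 := by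
            omega
          rw [heq] at hCk
          calc (0 : ℝ) < C k * (-1 : ℝ) ^ ((min k (2 * d - 1) + 1) / 2) * (lam k - ρ) :=
                mul_pos hCk hpos
            _ = D k * (-1 : ℝ) ^ ((min k (2 * d - 1) + 1) / 2) := by simp only [hD]; ring
        · -- k ≥ 2d+1 : the sign flips
          have hneg : 0 < ρ - lam k := by
            rcases eq_or_lt_of_le (show 2 * d + 1 ≤ k by omega) with h | h
            · rw [← h]; linarith
            · have := hlam (2 * d + 1) k h hk; linarith
          have hCk := hC k hk
          have heq : min k (2 * (d + 1) - 1) = 2 * d + 1 := by omega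
          rw [heq] at hCk
          have heq2 : (2 * d + 1 + 1) / 2 = d + 1 := by omega
          rw [heq2] at hCk
          have heq3 : (min k (2 * d - 1) + 1) / 2 = d := by omega
          rw [heq3]
          have hss : ((-1 : ℝ) ^ (d + 1)) * ((-1 : ℝ) ^ d) = -1 := by
            rw [← pow_add, show d + 1 + d = 2 * d + 1 by ring, pow_succ, pow_mul]
            norm_num
          have h4 : 0 < (C k * (-1 : ℝ) ^ (d + 1)) * (D k * (-1 : ℝ) ^ d) := by
            have : (C k * (-1 : ℝ) ^ (d + 1)) * (D k * (-1 : ℝ) ^ d)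
                = (C k * C k * (ρ - lam k)) * (-(((-1 : ℝ) ^ (d + 1)) * ((-1 : ℝ) ^ d))) := by
              simp only [hD]; ring
            rw [this, hss]
            have hCne : C k ≠ 0 := by
              intro h0
              rw [h0] at hCk
              simp at hCk
            have hC2 : 0 < C k * C k := mul_self_pos.mpr hCne
            simpa using mul_pos (mul_pos hC2 hneg) (show (0:ℝ) < 1 by norm_num)
          exact pos_right hCk h4
      obtain ⟨s, hs1, hs2⟩ := IH m D lam'
        (fun k l hkl hl => by simp only [hlam'def]; have := hlam k l hkl hl; linarith) hDsign
      have hderiv : ∀ x, deriv g x = 0 → x ∈ s := by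
        intro x hx
        rw [(hg' x).deriv] at hx
        exact hs2 x hx
      obtain ⟨u, hu1, hu2⟩ := rolle_count g hgdiff d s hs1 hderiv
      refine ⟨u, by omega, fun t ht => ?_⟩
      apply hu2
      have hfg : (∑ k ∈ Finset.range (m + 1), C k * Real.exp (lam k * t))
          = Real.exp (ρ * t) * g t := by
        rw [hgdef, Finset.mul_sum]
        apply Finset.sum_congr rfl
        intro k _
        rw [show Real.exp (ρ * t) * (C k * Real.exp (lam' k * t))
            = C k * (Real.exp (ρ * t) * Real.exp (lam' k * t)) by ring, ← Real.exp_add]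
        congr 2
        simp only [hlam'def]
        ring
      rw [hfg] at ht
      rcases mul_eq_zero.mp ht with h | h
      · exact absurd h (Real.exp_ne_zero _)
      · exact h

theorem stmt14 (d : ℕ) (μ B : ℕ → ℝ)
    (hμ1 : 0 < μ 1)
    (hμmono : ∀ i j, 1 ≤ i → i < j → j ≤ 2 * d → μ i < μ j)
    (hB0 : 0 < B 0)
    (hsign1 : ∀ i, 2 * i + 1 ≤ 2 * d → B (2 * i) * B (2 * i + 1) < 0)
    (hsign2 : ∀ i, 2 * i + 2 ≤ 2 * d → B (2 * i + 1) * B (2 * i + 2) > 0) :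
    ∃ s : Finset ℝ, s.card ≤ d ∧
      ∀ t : ℝ, B 0 + (∑ k ∈ Finset.Icc 1 (2 * d), B k * Real.exp (-(μ k) * t)) = 0 →
        t ∈ s := by
  -- exponents including the constant term
  set lam : ℕ → ℝ := fun k => if k = 0 then 0 else -(μ k) with hlamdef
  have hμpos : ∀ l, 1 ≤ l → l ≤ 2 * d → 0 < μ l := by
    intro l h1 h2
    rcases eq_or_lt_of_le h1 with h | h
    · rw [← h]; exact hμ1
    · have := hμmono 1 l le_rfl h h2; linarith
  have hlam : ∀ k l, k < l → l ≤ 2 * d → lam l < lam k := by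
    intro k l hkl hl
    simp only [hlamdef]
    rcases Nat.eq_zero_or_pos k with hk0 | hk0
    · subst hk0
      have hl1 : l ≠ 0 := by omega
      simp only [hl1, if_false, if_true]
      have := hμpos l (by omega) hl
      linarith
    · have hk' : k ≠ 0 := by omega
      have hl' : l ≠ 0 := by omega
      simp only [hk', hl', if_false]
      have := hμmono k l hk0 hkl hl
      linarith
  -- sign pattern
  have key : ∀ i : ℕ, (2 * i ≤ 2 * d → 0 < B (2 * i) * (-1 : ℝ) ^ i) ∧
      (2 * i + 1 ≤ 2 * d → 0 < B (2 * i + 1) * (-1 : ℝ) ^ (i + 1)) := by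
    intro i
    induction i with
    | zero =>
      constructor
      · intro _
        norm_num
        exact hB0
      · intro h
        have h1 := hsign1 0 (by omega)
        norm_num at h1
        have h2 : B 1 < 0 := by nlinarith
        norm_num
        linarith
    | succ i IH =>
      have hss : ((-1 : ℝ) ^ (i + 1)) * ((-1 : ℝ) ^ (i + 1)) = 1 := by
        rw [← pow_add, show i + 1 + (i + 1) = 2 * (i + 1) by ring, pow_mul]
        norm_num
      have hss' : ((-1 : ℝ) ^ (i + 1)) * ((-1 : ℝ) ^ (i + 2)) = -1 := by
        rw [← pow_add, show i + 1 + (i + 2) = 2 * (i + 1) + 1 by ring, pow_succ, pow_mul]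
        norm_num
      have part1 : 2 * (i + 1) ≤ 2 * d → 0 < B (2 * (i + 1)) * (-1 : ℝ) ^ (i + 1) := by
        intro h
        have h2 := hsign2 i (by omega)
        have h1 := IH.2 (by omega)
        apply pos_right h1
        have : B (2 * i + 1) * (-1 : ℝ) ^ (i + 1) * (B (2 * (i + 1)) * (-1 : ℝ) ^ (i + 1))
            = (B (2 * i + 1) * B (2 * i + 2)) * (((-1 : ℝ) ^ (i + 1)) * ((-1 : ℝ) ^ (i + 1)))
            := by rw [show 2 * (i + 1) = 2 * i + 2 by ring]; ring
        rw [this, hss, mul_one]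
        exact h2
      refine ⟨part1, ?_⟩
      intro h
      have h1 := part1 (by omega)
      have h2 := hsign1 (i + 1) (by omega)
      apply pos_right h1
      have : B (2 * (i + 1)) * (-1 : ℝ) ^ (i + 1) * (B (2 * (i + 1) + 1) * (-1 : ℝ) ^ (i + 2))
          = (B (2 * (i + 1)) * B (2 * (i + 1) + 1))
            * (((-1 : ℝ) ^ (i + 1)) * ((-1 : ℝ) ^ (i + 2))) := by ring
      rw [this, hss']
      nlinarith
  have hsig : ∀ k, k ≤ 2 * d → 0 < B k * (-1 : ℝ) ^ ((min k (2 * d - 1) + 1) / 2) := by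
    intro k hk
    have heq : (min k (2 * d - 1) + 1) / 2 = (k + 1) / 2 := by omega
    rw [heq]
    rcases Nat.even_or_odd k with ⟨i, hi⟩ | ⟨i, hi⟩
    · subst hi
      have heq2 : (i + i + 1) / 2 = i := by omega
      rw [heq2]
      have h := (key i).1 (by omega)
      rwa [two_mul] at h
    · subst hi
      have heq2 : (2 * i + 1 + 1) / 2 = i + 1 := by omega
      rw [heq2]
      exact (key i).2 (by omega)
  obtain ⟨s, hs1, hs2⟩ := aux d (2 * d) B lam hlam hsig
  refine ⟨s, hs1, fun t ht => hs2 t ?_⟩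
  have hsplit : Finset.range (2 * d + 1) = insert 0 (Finset.Icc 1 (2 * d)) := by
    ext x; simp; omega
  rw [hsplit, Finset.sum_insert (by simp)]
  have h0 : B 0 * Real.exp (lam 0 * t) = B 0 := by
    simp [hlamdef]
  rw [h0]
  have hrest : ∑ k ∈ Finset.Icc 1 (2 * d), B k * Real.exp (lam k * t)
      = ∑ k ∈ Finset.Icc 1 (2 * d), B k * Real.exp (-(μ k) * t) := by
    apply Finset.sum_congr rfl
    intro k hk
    have hk0 : k ≠ 0 := by
      have := Finset.mem_Icc.mp hk; omega
    simp [hlamdef, hk0]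
  rw [hrest]
  exact ht
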